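/- Let d ∈ ℕ with d ≥ 1, α ∈ [0, d/2), β ∈ ℝ and c ∈ (0,∞). Then sup_{v ∈ ℤ^d} [ (λ_v)^β · Σ_{k ∈ ℤ^d, ‖k‖ ≤ c‖v‖} 1/(λ_k)^α ] < ∞ if and only if β ≤ α − d/2. -/

import Mathlib

open scoped ENNReal

/-- `λ_x = 1 + x₁² + ⋯ + x_d²` for a lattice point `x ∈ ℤ^d`. -/
noncomputable def lam {d : ℕ} (x : Fin d → ℤ) : ℝ := 1 + ∑ i, ((x i : ℝ)) ^ 2

/-- The Euclidean norm of a lattice point `x ∈ ℤ^d`. -/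
noncomputable def znorm {d : ℕ} (x : Fin d → ℤ) : ℝ := Real.sqrt (∑ i, ((x i : ℝ)) ^ 2)

namespace GRFS
variable {d : ℕ}

lemma sumsq_nonneg (x : Fin d → ℤ) : 0 ≤ ∑ i, ((x i : ℝ))^2 :=
  Finset.sum_nonneg fun i _ => sq_nonneg _

lemma one_le_lam (x : Fin d → ℤ) : 1 ≤ lam x := le_add_of_nonneg_right (sumsq_nonneg x)

lemma lam_pos (x : Fin d → ℤ) : 0 < lam x := lt_of_lt_of_le one_pos (one_le_lam x)

lemma znorm_nonneg (x : Fin d → ℤ) : 0 ≤ znorm x := Real.sqrt_nonneg _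

lemma znorm_sq (x : Fin d → ℤ) : znorm x ^ 2 = ∑ i, ((x i:ℝ))^2 := Real.sq_sqrt (sumsq_nonneg x)

lemma lam_eq (x : Fin d → ℤ) : lam x = 1 + znorm x ^ 2 := by rw [znorm_sq]; rfl

/-- integer version of `lam` -/
def natm (x : Fin d → ℤ) : ℕ := 1 + ∑ i, (x i).natAbs ^ 2

lemma natm_cast (x : Fin d → ℤ) : ((natm x : ℝ)) = lam x := by
  unfold natm lam
  push_cast
  congr 1
  refine Finset.sum_congr rfl fun i _ => ?_
  rw [Nat.cast_natAbs]
  push_cast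
  rw [sq_abs]

lemma natm_pos (x : Fin d → ℤ) : 0 < natm x := Nat.succ_le_iff.mp (Nat.le_add_right 1 _)

noncomputable def box (d N : ℕ) : Finset (Fin d → ℤ) := Fintype.piFinset fun _ => Finset.Icc (-(N:ℤ)) N

lemma card_box (N : ℕ) : (box d N).card = (2*N+1)^d := by
  rw [box, Fintype.card_piFinset]
  simp [Int.card_Icc]
  congr 1
  omega

lemma mem_box_iff {N : ℕ} {x : Fin d → ℤ} : x ∈ box d N ↔ ∀ i, |x i| ≤ (N:ℤ) := by
  simp [box, Fintype.mem_piFinset, abs_le, Finset.mem_Icc, and_comm]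

lemma mem_box_of_znorm_le {T : ℝ} (hT : 0 ≤ T) {x : Fin d → ℤ} (h : znorm x ≤ T) :
    x ∈ box d ⌊T⌋₊ := by
  rw [mem_box_iff]
  intro i
  have h1 : ((x i : ℝ))^2 ≤ T^2 := by
    calc ((x i:ℝ))^2 ≤ ∑ j, ((x j:ℝ))^2 :=
      Finset.single_le_sum (f := fun j => ((x j:ℝ))^2) (fun j _ => sq_nonneg _) (Finset.mem_univ i)
    _ = znorm x ^ 2 := (znorm_sq x).symm
    _ ≤ T^2 := by
        have := znorm_nonneg x
        nlinarith
  have h2 : |(x i : ℝ)| ≤ T := by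
    rw [← Real.sqrt_sq_eq_abs]
    calc Real.sqrt (((x i:ℝ))^2) ≤ Real.sqrt (T^2) := Real.sqrt_le_sqrt h1
      _ = T := Real.sqrt_sq hT
  have habs : ((x i).natAbs : ℝ) = |(x i:ℝ)| := by
    push_cast [Nat.cast_natAbs]; ring_nf; try rfl
  have h3 : ((x i).natAbs : ℝ) ≤ T := by rw [habs]; exact h2
  have h4 : (x i).natAbs ≤ ⌊T⌋₊ := Nat.le_floor h3
  rw [Int.abs_eq_natAbs]
  exact_mod_cast h4

lemma znorm_le_of_mem_box {N : ℕ} {x : Fin d → ℤ} (h : x ∈ box d N) :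
    znorm x ≤ Real.sqrt d * N := by
  rw [mem_box_iff] at h
  have : ∑ i, ((x i:ℝ))^2 ≤ d * (N:ℝ)^2 := by
    calc ∑ i, ((x i:ℝ))^2 ≤ ∑ _i : Fin d, (N:ℝ)^2 := by
          refine Finset.sum_le_sum fun i _ => ?_
          have := h i
          have : |(x i : ℝ)| ≤ (N:ℝ) := by exact_mod_cast (abs_le.mpr (abs_le.mp this))
          nlinarith [abs_nonneg ((x i : ℝ)), sq_abs ((x i:ℝ))]
      _ = d * (N:ℝ)^2 := by simp [Finset.sum_const, mul_comm]
  calc znorm x ≤ Real.sqrt (d * (N:ℝ)^2) := Real.sqrt_le_sqrt this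
    _ = Real.sqrt d * N := by
        rw [Real.sqrt_mul (by positivity), Real.sqrt_sq (by positivity)]

lemma lam_le_of_mem_box {N : ℕ} {x : Fin d → ℤ} (h : x ∈ box d N) :
    lam x ≤ 1 + d * (N:ℝ)^2 := by
  have h := znorm_le_of_mem_box h
  rw [lam_eq]
  have h2 : znorm x ^ 2 ≤ (Real.sqrt d * N)^2 := by
    nlinarith [znorm_nonneg x]
  have h3 : (Real.sqrt d * (N:ℝ))^2 = d * (N:ℝ)^2 := by
    rw [mul_pow, Real.sq_sqrt (by positivity)]
  linarith

end GRFS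

namespace GRFS2
open GRFS

variable {d : ℕ}

lemma tsum_ite_le (P : (Fin d → ℤ) → Prop) [DecidablePred P] (N : ℕ)
    (hP : ∀ k, P k → k ∈ box d N) (a : ℝ≥0∞) (f : (Fin d → ℤ) → ℝ≥0∞)
    (hf : ∀ k, P k → f k ≤ a) :
    ∑' k, (if P k then f k else 0) ≤ (((2*N+1)^d : ℕ) : ℝ≥0∞) * a := by
  have h1 : ∀ k, (if P k then f k else 0) ≤ (if k ∈ box d N then a else 0) := by
    intro k
    by_cases h : P k
    · rw [if_pos h, if_pos (hP k h)]; exact hf k h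
    · rw [if_neg h]; exact zero_le
  calc ∑' k, (if P k then f k else 0) ≤ ∑' k, (if k ∈ box d N then a else 0) :=
        ENNReal.tsum_le_tsum h1
    _ = ∑ k ∈ box d N, (if k ∈ box d N then a else 0) :=
        tsum_eq_sum (s := box d N) (by intro k hk; simp [hk])
    _ = ∑ k ∈ box d N, a := Finset.sum_congr rfl fun k hk => if_pos hk
    _ = ((box d N).card : ℝ≥0∞) * a := by rw [Finset.sum_const, nsmul_eq_mul]
    _ = _ := by rw [card_box]

lemma shell_znorm (j : ℕ) (k : Fin d → ℤ) (h : Nat.log 2 (natm k) = j) :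
    znorm k ≤ Real.sqrt (2^(j+1)) := by
  have h1 : natm k < 2^(j+1) := by
    have := Nat.lt_pow_succ_log_self (by norm_num : 1 < 2) (natm k)
    rwa [h] at this
  have h2 : lam k < (2:ℝ)^(j+1) := by
    rw [← natm_cast]
    exact_mod_cast h1
  have h3 : znorm k ^ 2 ≤ (2:ℝ)^(j+1) := by
    rw [lam_eq] at h2; linarith
  calc znorm k = Real.sqrt (znorm k ^ 2) := (Real.sqrt_sq (znorm_nonneg k)).symm
    _ ≤ Real.sqrt ((2:ℝ)^(j+1)) := Real.sqrt_le_sqrt h3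

lemma shell_term (α : ℝ) (hα0 : 0 ≤ α) (j : ℕ) (k : Fin d → ℤ)
    (h : Nat.log 2 (natm k) = j) :
    ENNReal.ofReal (1 / (lam k) ^ α) ≤ ENNReal.ofReal (1 / ((2:ℝ)^j) ^ α) := by
  have h1 : (2:ℕ)^j ≤ natm k := by
    rw [← h]; exact Nat.pow_log_le_self 2 (natm_pos k).ne'
  have h2 : (2:ℝ)^j ≤ lam k := by rw [← natm_cast]; exact_mod_cast h1
  have h3 : ((2:ℝ)^j) ^ α ≤ (lam k) ^ α :=
    Real.rpow_le_rpow (by positivity) h2 hα0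
  exact ENNReal.ofReal_le_ofReal (one_div_le_one_div_of_le (by positivity) h3)

end GRFS2


namespace GRFS3
open GRFS GRFS2
variable {d : ℕ}

lemma geom_bound (q : ℝ) (hq : 1 < q) (J : ℕ) :
    ∑ j ∈ Finset.range (J+1), q^j ≤ q^(J+1)/(q-1) := by
  rw [geom_sum_eq (ne_of_gt hq)]
  have h1 : 0 < q - 1 := by linarith
  gcongr
  linarith [pow_pos (lt_trans one_pos hq) (J+1)]

lemma shell_real (α : ℝ) (hα0 : 0 ≤ α) (j : ℕ) :
    (2*(⌊Real.sqrt (2^(j+1))⌋₊:ℝ)+1)^d * (1/((2:ℝ)^j)^α)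
      ≤ 3^d * (2:ℝ)^((d:ℝ)/2) * ((2:ℝ)^((d:ℝ)/2 - α))^j := by
  set s : ℝ := Real.sqrt (2^(j+1)) with hs
  have hs0 : 0 ≤ s := Real.sqrt_nonneg _
  have hs1 : 1 ≤ s := by
    rw [hs, show (1:ℝ) = Real.sqrt 1 by simp]
    exact Real.sqrt_le_sqrt (one_le_pow₀ (by norm_num))
  have hfloor : (⌊s⌋₊ : ℝ) ≤ s := Nat.floor_le hs0
  have key : (2*(⌊s⌋₊:ℝ)+1) ≤ 3*s := by linarith
  have h1 : (2*(⌊s⌋₊:ℝ)+1)^d * (1/((2:ℝ)^j)^α) ≤ (3*s)^d * (1/((2:ℝ)^j)^α) := by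
    apply mul_le_mul_of_nonneg_right (pow_le_pow_left₀ (by positivity) key d)
    positivity
  refine h1.trans_eq ?_
  have hsr : s = (2:ℝ) ^ (((j:ℝ)+1)/2) := by
    rw [hs, Real.sqrt_eq_rpow, ← Real.rpow_natCast 2 (j+1), ← Real.rpow_mul (by norm_num)]
    push_cast; ring_nf
  have e1 : s ^ d = (2:ℝ) ^ ((((j:ℝ)+1)/2) * d) := by
    rw [hsr, ← Real.rpow_natCast ((2:ℝ) ^ (((j:ℝ)+1)/2)) d, ← Real.rpow_mul (by norm_num)]
  have e2 : (1/((2:ℝ)^j)^α) = (2:ℝ) ^ (-((j:ℝ)*α)) := by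
    rw [← Real.rpow_natCast 2 j, ← Real.rpow_mul (by norm_num), one_div, ← Real.rpow_neg (by norm_num)]
  have e3 : ((2:ℝ)^((d:ℝ)/2 - α))^j = (2:ℝ) ^ (((d:ℝ)/2 - α)*j) := by
    rw [← Real.rpow_natCast ((2:ℝ)^((d:ℝ)/2 - α)) j, ← Real.rpow_mul (by norm_num)]
  rw [mul_pow, e1, e2, e3, mul_assoc, mul_assoc, ← Real.rpow_add (by norm_num),
    ← Real.rpow_add (by norm_num)]
  congr 1
  ring



lemma ball_sum_le (α : ℝ) (hα0 : 0 ≤ α) (hα : α < (d:ℝ)/2) :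
    ∃ C : ℝ, 0 < C ∧ ∀ T : ℝ, 0 ≤ T →
      ∑' k : Fin d → ℤ, (if znorm k ≤ T then ENNReal.ofReal (1 / (lam k) ^ α) else 0)
        ≤ ENNReal.ofReal (C * (1 + T^2) ^ ((d:ℝ)/2 - α)) := by
  set q : ℝ := (2:ℝ) ^ ((d:ℝ)/2 - α) with hqdef
  have hq : 1 < q := by
    rw [hqdef]
    rw [Real.one_lt_rpow_iff_of_pos two_pos]
    left
    exact ⟨one_lt_two, by linarith⟩
  have hq0 : 0 < q := lt_trans one_pos hq
  set A : ℝ := 3^d * (2:ℝ)^((d:ℝ)/2) with hAdef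
  have hA : 0 < A := by positivity
  have hq1' : (0:ℝ) < q - 1 := by linarith
  refine ⟨A * q / (q-1), by positivity, ?_⟩
  intro T hT
  set J := Nat.log 2 (⌊T^2⌋₊ + 1) with hJ
  set f : (Fin d → ℤ) → ℝ≥0∞ := fun k => ENNReal.ofReal (1/(lam k)^α) with hf
  have step1 : ∀ k, (if znorm k ≤ T then f k else 0)
      ≤ ∑ j ∈ Finset.range (J+1),
          (if Nat.log 2 (natm k) = j ∧ znorm k ≤ T then f k else 0) := by
    intro k
    by_cases hk : znorm k ≤ T
    · have hmem : Nat.log 2 (natm k) ∈ Finset.range (J+1) := by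
        rw [Finset.mem_range, Nat.lt_succ_iff, hJ]
        apply Nat.log_mono_right
        have h1 : znorm k ^2 ≤ T^2 := by nlinarith [znorm_nonneg k]
        have h2 : (natm k : ℝ) ≤ T^2 + 1 := by rw [natm_cast, lam_eq]; linarith
        have h3 : natm k ≤ ⌊T^2 + 1⌋₊ := Nat.le_floor h2
        calc natm k ≤ ⌊T^2+1⌋₊ := h3
          _ = ⌊T^2⌋₊ + 1 := by rw [Nat.floor_add_one (sq_nonneg T)]
      rw [if_pos hk]
      calc f k = (if Nat.log 2 (natm k) = Nat.log 2 (natm k) ∧ znorm k ≤ T then f k else 0) :=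
            (if_pos ⟨rfl, hk⟩).symm
        _ ≤ _ := Finset.single_le_sum
            (f := fun j => if Nat.log 2 (natm k) = j ∧ znorm k ≤ T then f k else 0)
            (fun j _ => zero_le) hmem
    · rw [if_neg hk]; exact zero_le
  have step2 : (∑' k : Fin d → ℤ, (if znorm k ≤ T then f k else 0))
      ≤ ∑ j ∈ Finset.range (J+1), ∑' k : Fin d → ℤ,
          (if Nat.log 2 (natm k) = j ∧ znorm k ≤ T then f k else 0) := by
    calc (∑' k : Fin d → ℤ, (if znorm k ≤ T then f k else 0))
        ≤ ∑' k : Fin d → ℤ, ∑ j ∈ Finset.range (J+1),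
            (if Nat.log 2 (natm k) = j ∧ znorm k ≤ T then f k else 0) :=
          ENNReal.tsum_le_tsum step1
      _ = _ := Summable.tsum_finsetSum (fun j _ => ENNReal.summable)
  have step3 : ∀ j : ℕ, (∑' k : Fin d → ℤ,
        (if Nat.log 2 (natm k) = j ∧ znorm k ≤ T then f k else 0))
      ≤ ENNReal.ofReal (A * q^j) := by
    intro j
    have hb := GRFS2.tsum_ite_le (d := d)
      (fun k => Nat.log 2 (natm k) = j ∧ znorm k ≤ T) ⌊Real.sqrt (2^(j+1))⌋₊
      (fun k hk => mem_box_of_znorm_le (Real.sqrt_nonneg _) (GRFS2.shell_znorm j k hk.1))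
      (ENNReal.ofReal (1/((2:ℝ)^j)^α)) f (fun k hk => GRFS2.shell_term α hα0 j k hk.1)
    refine hb.trans ?_
    rw [← ENNReal.ofReal_natCast, ← ENNReal.ofReal_mul (by positivity)]
    apply ENNReal.ofReal_le_ofReal
    have := GRFS3.shell_real (d := d) α hα0 j
    refine le_trans (le_of_eq ?_) this
    push_cast
    ring
  have step4 : (∑ j ∈ Finset.range (J+1), ENNReal.ofReal (A * q^j))
      = ENNReal.ofReal (∑ j ∈ Finset.range (J+1), A * q^j) :=
    (ENNReal.ofReal_sum_of_nonneg (fun j _ => by positivity)).symm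
  have hq1 : q^(J+1) ≤ q * (1+T^2) ^ ((d:ℝ)/2 - α) := by
    have h2J : ((2:ℝ))^(J+1) ≤ 2*(1+T^2) := by
      have hnat : (2:ℕ)^J ≤ ⌊T^2⌋₊ + 1 := by
        rw [hJ]; exact Nat.pow_log_le_self 2 (Nat.succ_ne_zero _)
      have hr : ((2:ℝ))^J ≤ (⌊T^2⌋₊:ℝ) + 1 := by exact_mod_cast hnat
      have hfl : (⌊T^2⌋₊:ℝ) ≤ T^2 := Nat.floor_le (by positivity)
      calc ((2:ℝ))^(J+1) = 2 * 2^J := by ring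
        _ ≤ 2 * (1+T^2) := by nlinarith
    have hqe : q^(J+1) = ((2:ℝ)^(J+1:ℕ)) ^ ((d:ℝ)/2 - α) := by
      rw [hqdef, ← Real.rpow_natCast ((2:ℝ) ^ ((d:ℝ)/2 - α)) (J+1),
        ← Real.rpow_mul (by norm_num), ← Real.rpow_natCast (2:ℝ) (J+1),
        ← Real.rpow_mul (by norm_num), mul_comm]
    rw [hqe]
    calc ((2:ℝ)^(J+1:ℕ)) ^ ((d:ℝ)/2 - α) ≤ (2*(1+T^2)) ^ ((d:ℝ)/2 - α) :=
          Real.rpow_le_rpow (by positivity) h2J (by linarith)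
      _ = q * (1+T^2) ^ ((d:ℝ)/2 - α) := by
          rw [Real.mul_rpow (by norm_num) (by positivity), hqdef]
  have step5 : (∑ j ∈ Finset.range (J+1), A * q^j)
      ≤ A * q / (q-1) * (1+T^2) ^ ((d:ℝ)/2 - α) := by
    rw [← Finset.mul_sum]
    have hgeom := GRFS3.geom_bound q hq J
    calc A * (∑ j ∈ Finset.range (J+1), q^j) ≤ A * (q^(J+1)/(q-1)) := by
          exact mul_le_mul_of_nonneg_left hgeom hA.le
      _ ≤ A * ((q * (1+T^2) ^ ((d:ℝ)/2 - α))/(q-1)) := by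
          have h1 : (0:ℝ) < q - 1 := by linarith
          exact mul_le_mul_of_nonneg_left (by gcongr) hA.le
      _ = A * q / (q-1) * (1+T^2) ^ ((d:ℝ)/2 - α) := by ring
  calc (∑' k : Fin d → ℤ, (if znorm k ≤ T then f k else 0))
      ≤ ∑ j ∈ Finset.range (J+1), ∑' k : Fin d → ℤ,
          (if Nat.log 2 (natm k) = j ∧ znorm k ≤ T then f k else 0) := step2
    _ ≤ ∑ j ∈ Finset.range (J+1), ENNReal.ofReal (A * q^j) :=
        Finset.sum_le_sum (fun j _ => step3 j)
    _ = ENNReal.ofReal (∑ j ∈ Finset.range (J+1), A * q^j) := step4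
    _ ≤ _ := ENNReal.ofReal_le_ofReal step5

end GRFS3


open GRFS GRFS2 GRFS3 Filter in
set_option maxHeartbeats 2000000 in
/-- Growth rate of finite sums:
`sup_{v ∈ ℤ^d} [ (λ_v)^β · Σ_{k ∈ ℤ^d, ‖k‖ ≤ c‖v‖} 1/(λ_k)^α ] < ∞` iff `β ≤ α − d/2`,
for `α ∈ [0, d/2)`, `β ∈ ℝ`, `c ∈ (0,∞)`. -/
theorem growth_rate_finite_sums (d : ℕ) (hd : 1 ≤ d) (α : ℝ) (hα0 : 0 ≤ α)
    (hα : α < (d : ℝ) / 2) (β : ℝ) (c : ℝ) (hc : 0 < c) :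
    (⨆ v : Fin d → ℤ, ENNReal.ofReal ((lam v) ^ β) *
        ∑' k : Fin d → ℤ,
          (if znorm k ≤ c * znorm v then ENNReal.ofReal (1 / (lam k) ^ α) else 0)) < ⊤
      ↔ β ≤ α - (d : ℝ) / 2 := by
  have hd0 : (0:ℝ) < d := by exact_mod_cast hd
  set S := (⨆ v : Fin d → ℤ, ENNReal.ofReal ((lam v) ^ β) *
      ∑' k : Fin d → ℤ,
        (if znorm k ≤ c * znorm v then ENNReal.ofReal (1 / (lam k) ^ α) else 0)) with hS
  constructor
  · -- forward direction
    intro h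
    by_contra hβ
    push_neg at hβ
    have hsd : (0:ℝ) < Real.sqrt d := Real.sqrt_pos.mpr hd0
    set γ : ℝ := 2*β - 2*α + d with hγdef
    have hγ : 0 < γ := by simp only [hγdef]; linarith
    set c₀ : ℝ := (2:ℝ)^(-|β|) * (c/Real.sqrt d)^d * (1+c^2)^(-α) with hc0def
    have hc₀ : 0 < c₀ := by
      have h1 : (0:ℝ) < (2:ℝ)^(-|β|) := Real.rpow_pos_of_pos two_pos _
      have h2 : (0:ℝ) < (c/Real.sqrt d)^d := by positivity
      have h3 : (0:ℝ) < ((1:ℝ)+c^2)^(-α) := Real.rpow_pos_of_pos (by positivity) _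
      positivity
    have key : ∀ n : ℕ, 1 ≤ n → ENNReal.ofReal (c₀ * (n:ℝ)^γ) ≤ S := by
      intro n hn
      have hn0 : (0:ℝ) < n := by exact_mod_cast hn
      have hn1 : (1:ℝ) ≤ n := by exact_mod_cast hn
      have hnsq : (1:ℝ) ≤ (n:ℝ)^2 := by nlinarith
      set i0 : Fin d := ⟨0, hd⟩ with hi0
      set v : Fin d → ℤ := fun i => if i = i0 then (n:ℤ) else 0 with hv
      have hvsum : ∑ i, ((v i : ℝ))^2 = (n:ℝ)^2 := by
        have hterm : ∀ i, ((v i:ℝ))^2 = if i = i0 then (n:ℝ)^2 else 0 := by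
          intro i; by_cases hh : i = i0 <;> simp [hv, hh]
        rw [Finset.sum_congr rfl (fun i _ => hterm i),
          Finset.sum_ite_eq' Finset.univ i0 (fun _ => (n:ℝ)^2)]
        simp
      have hzv : znorm v = n := by
        rw [znorm, hvsum, Real.sqrt_sq hn0.le]
      have hlv : lam v = 1 + (n:ℝ)^2 := by rw [lam_eq, hzv]
      set m : ℕ := ⌊c*n/Real.sqrt d⌋₊ with hm
      have hcn : (0:ℝ) ≤ c*n/Real.sqrt d := by positivity
      have hmle : (m:ℝ) ≤ c*n/Real.sqrt d := Nat.floor_le hcn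
      have hbox1 : ∀ k, k ∈ box d m → znorm k ≤ c * znorm v := by
        intro k hk
        rw [hzv]
        calc znorm k ≤ Real.sqrt d * m := znorm_le_of_mem_box hk
          _ ≤ Real.sqrt d * (c*n/Real.sqrt d) := mul_le_mul_of_nonneg_left hmle hsd.le
          _ = c * n := by field_simp
      have hbox2 : ∀ k, k ∈ box d m → lam k ≤ 1 + c^2*(n:ℝ)^2 := by
        intro k hk
        calc lam k ≤ 1 + d*(m:ℝ)^2 := lam_le_of_mem_box hk
          _ ≤ 1 + (d:ℝ)*(c*n/Real.sqrt d)^2 := by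
              have h2 : (m:ℝ)^2 ≤ (c*n/Real.sqrt d)^2 :=
                pow_le_pow_left₀ (Nat.cast_nonneg m) hmle 2
              nlinarith [mul_le_mul_of_nonneg_left h2 hd0.le]
          _ = 1 + c^2*(n:ℝ)^2 := by
              rw [div_pow, Real.sq_sqrt hd0.le]
              field_simp
      set t : ℝ := 1/(1 + c^2*(n:ℝ)^2)^α with ht
      have htpos : 0 < (1 + c^2*(n:ℝ)^2) := by positivity
      have ht0 : 0 ≤ t := by positivity
      have hterm2 : ∀ k ∈ box d m,
          ENNReal.ofReal t ≤ (if znorm k ≤ c * znorm v then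
            ENNReal.ofReal (1 / (lam k) ^ α) else 0) := by
        intro k hk
        rw [if_pos (hbox1 k hk)]
        apply ENNReal.ofReal_le_ofReal
        apply one_div_le_one_div_of_le (Real.rpow_pos_of_pos (lam_pos k) α)
        exact Real.rpow_le_rpow (lam_pos k).le (hbox2 k hk) hα0
      have hsum1 : (((2*m+1)^d : ℕ):ℝ≥0∞) * ENNReal.ofReal t
          ≤ ∑' k : Fin d → ℤ, (if znorm k ≤ c * znorm v then
              ENNReal.ofReal (1 / (lam k) ^ α) else 0) := by
        calc (((2*m+1)^d : ℕ):ℝ≥0∞) * ENNReal.ofReal t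
            = ∑ _k ∈ box d m, ENNReal.ofReal t := by
              rw [Finset.sum_const, nsmul_eq_mul, card_box]
          _ ≤ ∑ k ∈ box d m, (if znorm k ≤ c * znorm v then
                ENNReal.ofReal (1 / (lam k) ^ α) else 0) :=
              Finset.sum_le_sum hterm2
          _ ≤ _ := ENNReal.sum_le_tsum _
      have hval : ENNReal.ofReal ((1+(n:ℝ)^2)^β * (((2*m+1)^d : ℕ):ℝ) * t) ≤ S := by
        calc ENNReal.ofReal ((1+(n:ℝ)^2)^β * (((2*m+1)^d : ℕ):ℝ) * t)
            = ENNReal.ofReal ((1+(n:ℝ)^2)^β) *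
                ((((2*m+1)^d : ℕ):ℝ≥0∞) * ENNReal.ofReal t) := by
              rw [ENNReal.ofReal_mul (by positivity), ENNReal.ofReal_mul (by positivity),
                ENNReal.ofReal_natCast, mul_assoc]
          _ ≤ ENNReal.ofReal ((lam v)^β) * (∑' k : Fin d → ℤ,
                (if znorm k ≤ c * znorm v then ENNReal.ofReal (1 / (lam k) ^ α) else 0)) := by
              rw [hlv]
              exact mul_le_mul_right hsum1 _
          _ ≤ S := by
              rw [hS]
              exact le_iSup (fun w : Fin d → ℤ => ENNReal.ofReal ((lam w) ^ β) *
                ∑' k : Fin d → ℤ,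
                  (if znorm k ≤ c * znorm w then ENNReal.ofReal (1 / (lam k) ^ α) else 0)) v
      refine le_trans (ENNReal.ofReal_le_ofReal ?_) hval
      -- the real inequality
      have hsq : (n:ℝ)^(2*β) = ((n:ℝ)^2)^β := by
        rw [← Real.rpow_natCast (n:ℝ) 2, ← Real.rpow_mul hn0.le]
        norm_num
      have F1 : (2:ℝ)^(-|β|) * (n:ℝ)^(2*β) ≤ (1+(n:ℝ)^2)^β := by
        rcases le_or_gt 0 β with hb | hb
        · have h21 : (2:ℝ)^(-|β|) ≤ 1 :=
            Real.rpow_le_one_of_one_le_of_nonpos one_le_two (neg_nonpos.mpr (abs_nonneg β))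
          calc (2:ℝ)^(-|β|) * (n:ℝ)^(2*β) ≤ 1 * (n:ℝ)^(2*β) :=
                mul_le_mul_of_nonneg_right h21 (Real.rpow_nonneg hn0.le _)
            _ = ((n:ℝ)^2)^β := by rw [one_mul, hsq]
            _ ≤ (1+(n:ℝ)^2)^β := Real.rpow_le_rpow (by positivity) (by linarith) hb
        · have habs : -|β| = β := by rw [abs_of_neg hb]; ring
          rw [habs, hsq, ← Real.mul_rpow (by norm_num) (by positivity)]
          exact Real.rpow_le_rpow_of_nonpos (by positivity) (by nlinarith) hb.le
      have F2 : (c/Real.sqrt d)^d * (n:ℝ)^((d:ℝ)) ≤ (((2*m+1)^d : ℕ):ℝ) := by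
        have hlt : c*n/Real.sqrt d ≤ (2*m+1 : ℕ) := by
          have := Nat.lt_floor_add_one (c*n/Real.sqrt d)
          push_cast
          push_cast at this
          linarith
        calc (c/Real.sqrt d)^d * (n:ℝ)^((d:ℝ))
            = (c*n/Real.sqrt d)^d := by
              rw [Real.rpow_natCast]
              rw [← mul_pow]
              congr 1
              ring
          _ ≤ ((2*m+1 : ℕ):ℝ)^d := pow_le_pow_left₀ hcn hlt d
          _ = (((2*m+1)^d : ℕ):ℝ) := by push_cast; ring
      have F3 : (1+c^2)^(-α) * (n:ℝ)^(-(2*α)) ≤ t := by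
        have ht' : t = (1 + c^2*(n:ℝ)^2)^(-α) := by
          rw [ht, one_div, ← Real.rpow_neg htpos.le]
        have hsq2 : (n:ℝ)^(-(2*α)) = ((n:ℝ)^2)^(-α) := by
          rw [← Real.rpow_natCast (n:ℝ) 2, ← Real.rpow_mul hn0.le]
          norm_num
        rw [ht', hsq2, ← Real.mul_rpow (by positivity) (by positivity)]
        exact Real.rpow_le_rpow_of_nonpos htpos (by nlinarith) (by linarith)
      have hsplit : (n:ℝ)^γ = (n:ℝ)^(2*β) * (n:ℝ)^((d:ℝ)) * (n:ℝ)^(-(2*α)) := by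
        rw [← Real.rpow_add hn0, ← Real.rpow_add hn0]
        congr 1
        rw [hγdef]; ring
      calc c₀ * (n:ℝ)^γ
          = ((2:ℝ)^(-|β|) * (n:ℝ)^(2*β)) * ((c/Real.sqrt d)^d * (n:ℝ)^((d:ℝ)))
            * ((1+c^2)^(-α) * (n:ℝ)^(-(2*α))) := by
            rw [hsplit, hc0def]; ring
        _ ≤ (1+(n:ℝ)^2)^β * (((2*m+1)^d : ℕ):ℝ) * t := by
            apply mul_le_mul _ F3 (by positivity) (by positivity)
            apply mul_le_mul F1 F2 (by positivity) (Real.rpow_nonneg (by positivity) β)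
    -- derive contradiction
    have hS' : S ≠ ⊤ := h.ne
    have htend : Tendsto (fun n : ℕ => c₀ * (n:ℝ)^γ) atTop atTop :=
      (tendsto_const_mul_atTop_of_pos hc₀).mpr
        ((tendsto_rpow_atTop hγ).comp tendsto_natCast_atTop_atTop)
    obtain ⟨n, hbig, hge1⟩ := ((htend.eventually_ge_atTop (S.toReal + 1)).and
      (eventually_ge_atTop 1)).exists
    have hle := key n hge1
    rw [← ENNReal.ofReal_toReal hS'] at hle
    have h2 := (ENNReal.ofReal_le_ofReal_iff ENNReal.toReal_nonneg).mp hle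
    linarith
  · -- backward direction
    intro hβ
    obtain ⟨C, hC, hbound⟩ := GRFS3.ball_sum_le (d := d) α hα0 hα
    set K : ℝ := max 1 (c^2) with hK
    have hK1 : (1:ℝ) ≤ K := le_max_left _ _
    have he : (0:ℝ) ≤ (d:ℝ)/2 - α := by linarith
    have hfin : S ≤ ENNReal.ofReal (C * K ^ ((d:ℝ)/2-α)) := by
      rw [hS]
      apply iSup_le
      intro v
      have hT : 0 ≤ c * znorm v := mul_nonneg hc.le (znorm_nonneg v)
      calc ENNReal.ofReal ((lam v)^β) * ∑' k : Fin d → ℤ,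
            (if znorm k ≤ c * znorm v then ENNReal.ofReal (1 / (lam k) ^ α) else 0)
          ≤ ENNReal.ofReal ((lam v)^β) *
              ENNReal.ofReal (C * (1 + (c*znorm v)^2) ^ ((d:ℝ)/2-α)) :=
            mul_le_mul_right (hbound _ hT) _
        _ = ENNReal.ofReal ((lam v)^β * (C * (1 + (c*znorm v)^2) ^ ((d:ℝ)/2-α))) :=
            (ENNReal.ofReal_mul (Real.rpow_nonneg (lam_pos v).le β)).symm
        _ ≤ ENNReal.ofReal (C * K ^ ((d:ℝ)/2-α)) := by
            apply ENNReal.ofReal_le_ofReal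
            have h1 : 1 + (c*znorm v)^2 ≤ K * lam v := by
              rw [lam_eq]
              have h2 : c^2 ≤ K := le_max_right _ _
              nlinarith [sq_nonneg (znorm v)]
            have h3 : (1 + (c*znorm v)^2) ^ ((d:ℝ)/2-α)
                ≤ K^((d:ℝ)/2-α) * (lam v)^((d:ℝ)/2-α) := by
              rw [← Real.mul_rpow (by linarith) (lam_pos v).le]
              exact Real.rpow_le_rpow (by positivity) h1 he
            have h4 : (lam v)^β * (lam v)^((d:ℝ)/2-α) ≤ 1 := by
              rw [← Real.rpow_add (lam_pos v)]
              exact Real.rpow_le_one_of_one_le_of_nonpos (one_le_lam v) (by linarith)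
            have hKe : (0:ℝ) ≤ K^((d:ℝ)/2-α) := Real.rpow_nonneg (by linarith) _
            calc (lam v)^β * (C * (1 + (c*znorm v)^2) ^ ((d:ℝ)/2-α))
                ≤ (lam v)^β * (C * (K^((d:ℝ)/2-α) * (lam v)^((d:ℝ)/2-α))) := by
                  apply mul_le_mul_of_nonneg_left _ (Real.rpow_nonneg (lam_pos v).le β)
                  exact mul_le_mul_of_nonneg_left h3 hC.le
              _ = (C * K^((d:ℝ)/2-α)) * ((lam v)^β * (lam v)^((d:ℝ)/2-α)) := by ring
              _ ≤ (C * K^((d:ℝ)/2-α)) * 1 :=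
                  mul_le_mul_of_nonneg_left h4 (by positivity)
              _ = C * K^((d:ℝ)/2-α) := mul_one _
    exact lt_of_le_of_lt hfin ENNReal.ofReal_lt_top
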